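/- Let F(b) be the feasible set of a parameterized linear system, S(b) its Pareto-nondominated set with respect to c₁,…,c_q, and C := cone{c₁,…,c_q}. Fix (b̄, x̄) with x̄ ∈ F(b̄) + {c₁,…,c_q}°, fix c ∈ C, and fix y ∈ ℝᵐ. If ⟨y, b − b̄⟩ ≤ ⟨c, x − x̄⟩ for all (b, x) with x ∈ S(b), and if S(b) is nonempty whenever F(b) is nonempty, then ⟨y, b − b̄⟩ ≤ ⟨c, x − x̄⟩ for all (b, x) with x ∈ F(b). -/

import Mathlib

/-- The dot product. -/
def dot {n : ℕ} (a x : Fin n → ℝ) : ℝ := ∑ i, a i * x i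

/-- Feasibility for the linear system `⟨aₜ, x⟩ ≤ bₜ`, `t = 1,…,m`. -/
def Feas {n m : ℕ} (a : Fin m → Fin n → ℝ) (b : Fin m → ℝ) (x : Fin n → ℝ) : Prop :=
  ∀ t, dot (a t) x ≤ b t

/-- Pareto-nondominated points of `F(b)` with respect to objectives `c₁,…,c_q`. -/
def Pareto {n m q : ℕ} (a : Fin m → Fin n → ℝ) (b : Fin m → ℝ)
    (c : Fin q → Fin n → ℝ) (x : Fin n → ℝ) : Prop :=
  Feas a b x ∧ ¬ ∃ y, Feas a b y ∧ (∀ j, dot (c j) y ≤ dot (c j) x) ∧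
    ∃ j, dot (c j) y < dot (c j) x

section Stmt4Aux

open scoped RealInnerProductSpace
open Finset

variable {E : Type*} [NormedAddCommGroup E] [InnerProductSpace ℝ E]

/-- Reduction step for the conical Carathéodory theorem. -/
lemma cone_reduce {ι : Type*} [Fintype ι] [DecidableEq ι] (g : ι → E) (s : Finset ι)
    (μ : ι → ℝ) (hμ : ∀ i, 0 ≤ μ i) (hμs : ∀ i ∉ s, μ i = 0)
    (D : ι → ℝ) (hDs : ∀ i ∉ s, D i = 0) (hDsum : ∑ i, D i • g i = 0)
    (hpos : ∃ i ∈ s, 0 < D i) :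
    ∃ t ⊂ s, ∃ ν : ι → ℝ, (∀ i, 0 ≤ ν i) ∧ (∀ i ∉ t, ν i = 0) ∧
      ∑ i, ν i • g i = ∑ i, μ i • g i := by
  classical
  set T : Finset ι := s.filter (fun i => 0 < D i) with hT
  have hTne : T.Nonempty := by
    obtain ⟨i, hi, hDi⟩ := hpos
    exact ⟨i, by simp [hT, hi, hDi]⟩
  obtain ⟨i0, hi0T, hmin⟩ := T.exists_min_image (fun i => μ i / D i) hTne
  have hi0s : i0 ∈ s := (Finset.mem_filter.1 hi0T).1
  have hDi0 : 0 < D i0 := (Finset.mem_filter.1 hi0T).2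
  set c : ℝ := μ i0 / D i0 with hc
  have hc0 : 0 ≤ c := div_nonneg (hμ i0) hDi0.le
  refine ⟨s.erase i0, Finset.erase_ssubset hi0s, fun i => μ i - c * D i, ?_, ?_, ?_⟩
  · intro i
    show 0 ≤ μ i - c * D i
    by_cases hiT : i ∈ T
    · have hDi : 0 < D i := (Finset.mem_filter.1 hiT).2
      have := hmin i hiT
      have h2 : c * D i ≤ μ i := by
        rw [hc]
        calc μ i0 / D i0 * D i ≤ μ i / D i * D i := by
              exact mul_le_mul_of_nonneg_right this hDi.le
          _ = μ i := div_mul_cancel₀ _ hDi.ne'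
      linarith
    · have hDi : D i ≤ 0 := by
        by_cases his : i ∈ s
        · by_contra h
          exact hiT (Finset.mem_filter.2 ⟨his, lt_of_not_ge h⟩)
        · simp [hDs i his]
      nlinarith [hμ i]
  · intro i hi
    show μ i - c * D i = 0
    by_cases his : i ∈ s
    · have hii0 : i = i0 := by
        by_contra hne
        exact hi (Finset.mem_erase.2 ⟨hne, his⟩)
      subst hii0
      rw [hc, div_mul_cancel₀ _ hDi0.ne', sub_self]
    · rw [hμs i his, hDs i his, mul_zero, sub_zero]
  · have : ∑ i, (μ i - c * D i) • g i = ∑ i, μ i • g i - c • ∑ i, D i • g i := by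
      rw [Finset.smul_sum, ← Finset.sum_sub_distrib]
      congr 1; ext i; rw [sub_smul, smul_smul]
    rw [this, hDsum, smul_zero, sub_zero]

/-- Conical Carathéodory: any nonnegative combination is a nonnegative combination over a
linearly independent subfamily. -/
lemma cone_caratheodory {ι : Type*} [Fintype ι] [DecidableEq ι] (g : ι → E) :
    ∀ s : Finset ι, ∀ μ : ι → ℝ, (∀ i, 0 ≤ μ i) → (∀ i ∉ s, μ i = 0) →
    ∃ (t : Finset ι) (ν : ι → ℝ), (∀ i, 0 ≤ ν i) ∧ (∀ i ∉ t, ν i = 0) ∧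
      LinearIndependent ℝ (fun i : t => g i) ∧ ∑ i, ν i • g i = ∑ i, μ i • g i := by
  intro s
  induction s using Finset.strongInductionOn with
  | _ s ih =>
    intro μ hμ hμs
    by_cases hind : LinearIndependent ℝ (fun i : s => g i)
    · exact ⟨s, μ, hμ, hμs, hind, rfl⟩
    · obtain ⟨d, hdsum, i0, hi0⟩ := Fintype.not_linearIndependent_iff.1 hind
      set D : ι → ℝ := fun i => if h : i ∈ s then d ⟨i, h⟩ else 0 with hD
      have hDs : ∀ i ∉ s, D i = 0 := fun i hi => by simp [hD, hi]
      have hDsum : ∑ i, D i • g i = 0 := by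
        rw [← Finset.sum_subset (Finset.subset_univ s)
          (fun i _ hi => by rw [hDs i hi, zero_smul])]
        rw [← Finset.sum_attach s (fun i => D i • g i)]
        rw [← hdsum]
        exact Finset.sum_congr rfl fun i _ => by simp [hD, i.2]
      have hDne : D (i0 : ι) = d i0 := by simp [hD, i0.2]
      rcases lt_or_gt_of_ne hi0 with hneg | hpos
      · -- d i0 < 0 : use -D
        have hDsum' : ∑ i, (-D) i • g i = 0 := by
          simp only [Pi.neg_apply, neg_smul, Finset.sum_neg_distrib, hDsum, neg_zero]
        obtain ⟨t, hts, ν, h1, h2, h3⟩ := cone_reduce g s μ hμ hμs (-D)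
          (fun i hi => by simp [hDs i hi]) hDsum'
          ⟨i0, i0.2, by simp [hDne]; linarith⟩
        obtain ⟨t', ν', H1, H2, H3, H4⟩ := ih t hts ν h1 h2
        exact ⟨t', ν', H1, H2, H3, H4.trans h3⟩
      · obtain ⟨t, hts, ν, h1, h2, h3⟩ := cone_reduce g s μ hμ hμs D hDs hDsum
          ⟨i0, i0.2, by rw [hDne]; exact hpos⟩
        obtain ⟨t', ν', H1, H2, H3, H4⟩ := ih t hts ν h1 h2
        exact ⟨t', ν', H1, H2, H3, H4.trans h3⟩

/-- A finitely generated cone is closed. -/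
lemma isClosed_cone {ι : Type*} [Fintype ι] [DecidableEq ι] [FiniteDimensional ℝ E] (g : ι → E) :
    IsClosed {x : E | ∃ μ : ι → ℝ, (∀ i, 0 ≤ μ i) ∧ x = ∑ i, μ i • g i} := by
  classical
  have hmain : {x : E | ∃ μ : ι → ℝ, (∀ i, 0 ≤ μ i) ∧ x = ∑ i, μ i • g i} =
      ⋃ t : {t : Finset ι // LinearIndependent ℝ (fun i : t => g i)},
        (fun μ : {i // i ∈ t.1} → ℝ => ∑ i, μ i • g i.1) '' {μ | ∀ i, 0 ≤ μ i} := by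
    ext x
    simp only [Set.mem_setOf_eq, Set.mem_iUnion, Set.mem_image, Set.mem_setOf_eq]
    constructor
    · rintro ⟨μ, hμ, rfl⟩
      obtain ⟨t, ν, h1, h2, h3, h4⟩ := cone_caratheodory g Finset.univ μ hμ (by simp)
      refine ⟨⟨t, h3⟩, fun i => ν i, fun i => h1 i, ?_⟩
      show ∑ i : {x // x ∈ t}, ν i • g i = _
      rw [Finset.sum_coe_sort t (fun i => ν i • g i), ← h4]
      exact Finset.sum_subset (Finset.subset_univ t)
        (fun i _ hi => by rw [h2 i hi, zero_smul])
    · rintro ⟨⟨t, h3⟩, μ, hμ, rfl⟩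
      refine ⟨fun i => if h : i ∈ t then μ ⟨i, h⟩ else 0, fun i => by
        by_cases h : i ∈ t <;> simp [h] <;> exact hμ ⟨i, ‹_›⟩, ?_⟩
      rw [← Finset.sum_subset (Finset.subset_univ t)
        (fun i _ hi => by simp [hi])]
      rw [← Finset.sum_coe_sort t fun i => (if h : i ∈ t then μ ⟨i, h⟩ else 0) • g i]
      exact (Finset.sum_congr rfl fun i _ => by simp [i.2]).symm
  rw [hmain]
  refine isClosed_iUnion_of_finite fun t => ?_
  obtain ⟨t, h3⟩ := t
  have hker : LinearMap.ker (Fintype.linearCombination ℝ (fun i : t => g i)) = ⊥ := by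
    rw [LinearMap.ker_eq_bot']
    intro μ hμ
    funext i
    refine Fintype.linearIndependent_iff.1 h3 μ ?_ i
    exact hμ
  have hemb := LinearMap.isClosedEmbedding_of_injective (𝕜 := ℝ) hker
  have horth : IsClosed {μ : t → ℝ | ∀ i, 0 ≤ μ i} := by
    have : {μ : t → ℝ | ∀ i, 0 ≤ μ i} = ⋂ i, {μ | 0 ≤ μ i} := by
      ext; simp
    rw [this]
    exact isClosed_iInter fun i => isClosed_le continuous_const (continuous_apply i)
  have := hemb.isClosedMap _ horth
  convert this using 2
  exact (Fintype.linearCombination_apply ℝ _ _).symm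

/-- Farkas' lemma for a finite system of linear inequalities. -/
lemma farkas {ι : Type*} [Fintype ι] [DecidableEq ι] [FiniteDimensional ℝ E]
    (w : ι → E) (β : ι → ℝ) (h : ¬ ∃ x : E, ∀ i, ⟪w i, x⟫ ≤ β i) :
    ∃ l : ι → ℝ, (∀ i, 0 ≤ l i) ∧ ∑ i, l i • w i = 0 ∧ ∑ i, l i * β i < 0 := by
  classical
  have : FiniteDimensional ℝ (WithLp 2 (E × ℝ)) :=
    Module.Finite.equiv (WithLp.linearEquiv 2 ℝ (E × ℝ)).symm
  set em : E × ℝ ≃ WithLp 2 (E × ℝ) := WithLp.equiv 2 (E × ℝ) |>.symm with hem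
  have hip : ∀ p p' : E × ℝ, ⟪em p, em p'⟫ = ⟪p.1, p'.1⟫ + p.2 * p'.2 := by
    intro p p'
    rw [hem, WithLp.prod_inner_apply]
    simp [RCLike.inner_apply, mul_comm]
  set gp : Option ι → E × ℝ := fun k => Option.rec ((0 : E), (1 : ℝ))
    (fun i => (w i, β i)) k with hgp
  set g : Option ι → WithLp 2 (E × ℝ) := fun k => em (gp k) with hg
  set Kset : Set (WithLp 2 (E × ℝ)) :=
    {x : WithLp 2 (E × ℝ) | ∃ μ : Option ι → ℝ, (∀ k, 0 ≤ μ k) ∧ x = ∑ k, μ k • g k}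
    with hKset
  by_cases hb : em ((0 : E), (-1 : ℝ)) ∈ Kset
  · obtain ⟨μ, hμ, hsum⟩ := hb
    refine ⟨fun i => μ (some i), fun i => hμ _, ?_, ?_⟩
    · set S : E := ∑ i, μ (some i) • w i with hS
      have key : ⟪S, S⟫ = 0 := by
        have h1 : ⟪em (S, 0), em ((0:E), (-1:ℝ))⟫ = (0 : ℝ) := by
          rw [hip]; simp
        rw [hsum, inner_sum] at h1
        have h2 : ∀ k, ⟪em (S, (0:ℝ)), μ k • g k⟫ = μ k * ⟪S, (gp k).1⟫ := by
          intro k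
          rw [real_inner_smul_right, hg, hip]
          simp
        simp only [h2] at h1
        rw [Fintype.sum_option] at h1
        simp only [hgp, inner_zero_right, mul_zero, zero_add] at h1
        rw [← h1, hS, inner_sum]
        exact Finset.sum_congr rfl fun i _ => real_inner_smul_right _ _ _
      rwa [inner_self_eq_zero] at key
    · have h1 : ⟪em ((0:E), 1), em ((0:E), (-1:ℝ))⟫ = (-1 : ℝ) := by
        rw [hip]; simp
      rw [hsum, inner_sum] at h1
      have h2 : ∀ k, ⟪em ((0:E), (1:ℝ)), μ k • g k⟫ = μ k * (gp k).2 := by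
        intro k
        rw [real_inner_smul_right, hg, hip]
        simp
      simp only [h2] at h1
      rw [Fintype.sum_option] at h1
      have h3 : ∀ i, μ (some i) * (gp (some i)).2 = μ (some i) * β i := fun i => rfl
      have h3' : μ none * (gp none).2 = μ none * 1 := rfl
      simp only [h3, h3'] at h1
      have h4 := hμ none
      have h5 : ∑ i, μ (some i) * β i = -1 - μ none * 1 := by linarith
      rw [h5]; linarith
  · -- separation
    set K : ConvexCone ℝ (WithLp 2 (E × ℝ)) :=
      { carrier := Kset
        smul_mem' := by
          rintro c hc x ⟨μ, hμ, rfl⟩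
          refine ⟨fun k => c * μ k, fun k => mul_nonneg hc.le (hμ k), ?_⟩
          rw [Finset.smul_sum]
          exact Finset.sum_congr rfl fun k _ => by rw [smul_smul]
        add_mem' := by
          rintro x ⟨μ, hμ, rfl⟩ y ⟨ν, hν, rfl⟩
          refine ⟨fun k => μ k + ν k, fun k => add_nonneg (hμ k) (hν k), ?_⟩
          rw [← Finset.sum_add_distrib]
          exact Finset.sum_congr rfl fun k _ => by rw [add_smul] } with hK
    have hKne : (K : Set (WithLp 2 (E × ℝ))).Nonempty := ⟨0, ⟨0, fun k => le_refl 0, by simp⟩⟩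
    have hKcl : IsClosed (K : Set (WithLp 2 (E × ℝ))) := isClosed_cone g
    let PC : ProperCone ℝ (WithLp 2 (E × ℝ)) :=
      { carrier := Kset
        add_mem' := fun {x y} hx hy => K.add_mem' hx hy
        zero_mem' := ⟨0, fun _ => le_refl 0, by simp⟩
        smul_mem' := by
          rintro c x ⟨μ, hμ, rfl⟩
          refine ⟨fun k => (c : ℝ) * μ k, fun k => mul_nonneg c.2 (hμ k), ?_⟩
          rw [Finset.smul_sum]
          exact Finset.sum_congr rfl fun k _ => by rw [mul_smul]; rfl
        isClosed' := hKcl }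
    obtain ⟨y, hy1, hy2⟩ :=
      PC.hyperplane_separation' (show em ((0 : E), (-1 : ℝ)) ∉ PC from hb)
    exfalso
    set yp : E × ℝ := em.symm y with hyp
    have hy : y = em yp := by simp [hyp]
    have hyt : 0 < yp.2 := by
      have := hy2
      rw [hy, hip] at this
      simp at this
      linarith
    have hgmem : ∀ i, g (some i) ∈ K := by
      intro i
      refine ⟨fun k => if k = some i then 1 else 0, fun k => by positivity, ?_⟩
      simp [ite_smul]
    have hkey : ∀ i, 0 ≤ ⟪w i, yp.1⟫ + β i * yp.2 := by
      intro i
      have := hy1 _ (hgmem i)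
      rw [hy, hg, hip] at this
      simpa [hgp] using this
    apply h
    refine ⟨(yp.2)⁻¹ • (-yp.1), fun i => ?_⟩
    rw [real_inner_smul_right, inner_neg_right]
    have h6 := hkey i
    rw [inv_mul_le_iff₀ hyt] -- guess name
    nlinarith

/-- A linear program bounded below attains its minimum. -/
lemma lp_attain {ι : Type*} [Fintype ι] [DecidableEq ι] [FiniteDimensional ℝ E]
    (w : ι → E) (β : ι → ℝ) (φ : E) (x0 : E) (hx0 : ∀ i, ⟪w i, x0⟫ ≤ β i)
    (L : ℝ) (hbdd : ∀ z : E, (∀ i, ⟪w i, z⟫ ≤ β i) → L ≤ ⟪φ, z⟫) :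
    ∃ x : E, (∀ i, ⟪w i, x⟫ ≤ β i) ∧
      ∀ z : E, (∀ i, ⟪w i, z⟫ ≤ β i) → ⟪φ, x⟫ ≤ ⟪φ, z⟫ := by
  classical
  set P : Set E := {z | ∀ i, ⟪w i, z⟫ ≤ β i} with hP
  set A : Set ℝ := (fun z => ⟪φ, z⟫) '' P with hA
  have hAne : A.Nonempty := ⟨⟪φ, x0⟫, x0, hx0, rfl⟩
  have hAbdd : BddBelow A := ⟨L, by rintro r ⟨z, hz, rfl⟩; exact hbdd z hz⟩
  set α : ℝ := sInf A with hα
  by_cases hopt : ∃ x ∈ P, ⟪φ, x⟫ ≤ α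
  · obtain ⟨x, hxP, hxα⟩ := hopt
    exact ⟨x, hxP, fun z hz => hxα.trans (csInf_le hAbdd ⟨z, hz, rfl⟩)⟩
  · exfalso
    push_neg at hopt
    set W : Option ι → E := fun k => Option.rec φ w k with hW
    set B : Option ι → ℝ := fun k => Option.rec α β k with hB
    have hinfeas : ¬ ∃ z : E, ∀ k, ⟪W k, z⟫ ≤ B k := by
      rintro ⟨z, hz⟩
      have hzP : z ∈ P := fun i => hz (some i)
      exact absurd (hz none) (not_le.2 (hopt z hzP))
    obtain ⟨l, hl, hlsum, hlβ⟩ := farkas W B hinfeas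
    rw [Fintype.sum_option] at hlsum hlβ
    have hWnone : W none = φ := rfl
    have hBnone : B none = α := rfl
    have hWs : ∀ i, W (some i) = w i := fun i => rfl
    have hBs : ∀ i, B (some i) = β i := fun i => rfl
    simp only [hWnone, hBnone, hWs, hBs] at hlsum hlβ
    set μ : ℝ := l none with hμ
    rcases eq_or_lt_of_le (hl none) with hμ0 | hμpos'
    · -- μ = 0
      have hμ0' : μ = 0 := by rw [hμ, ← hμ0]
      rw [hμ0'] at hlsum hlβ
      rw [zero_smul, zero_add] at hlsum
      rw [zero_mul, zero_add] at hlβ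
      have h1 : ∀ z ∈ P, (0:ℝ) ≤ ∑ i, l (some i) * β i := by
        intro z hz
        have h2 : ⟪∑ i, l (some i) • w i, z⟫ = (0:ℝ) := by rw [hlsum, inner_zero_left]
        rw [sum_inner] at h2
        have h3 : ∀ i, ⟪l (some i) • w i, z⟫ = l (some i) * ⟪w i, z⟫ :=
          fun i => real_inner_smul_left _ _ _
        simp only [h3] at h2
        rw [← h2]
        exact Finset.sum_le_sum fun i _ =>
          mul_le_mul_of_nonneg_left (hz i) (hl (some i))
      exact absurd (h1 x0 hx0) (not_le.2 hlβ)
    · -- μ > 0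
      have hμpos : 0 < μ := by rw [hμ]; exact hμpos'
      have hbound : ∀ z ∈ P, (-∑ i, l (some i) * β i) / μ ≤ ⟪φ, z⟫ := by
        intro z hz
        have h2 : ⟪μ • φ + ∑ i, l (some i) • w i, z⟫ = (0:ℝ) := by
          rw [hlsum, inner_zero_left]
        rw [inner_add_left, real_inner_smul_left, sum_inner] at h2
        have h3 : ∀ i, ⟪l (some i) • w i, z⟫ = l (some i) * ⟪w i, z⟫ :=
          fun i => real_inner_smul_left _ _ _
        simp only [h3] at h2
        have h4 : ∑ i, l (some i) * ⟪w i, z⟫ ≤ ∑ i, l (some i) * β i :=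
          Finset.sum_le_sum fun i _ => mul_le_mul_of_nonneg_left (hz i) (hl (some i))
        rw [div_le_iff₀ hμpos]
        nlinarith
      have h5 : (-∑ i, l (some i) * β i) / μ ≤ α :=
        le_csInf hAne (by rintro r ⟨z, hz, rfl⟩; exact hbound z hz)
      rw [div_le_iff₀ hμpos] at h5
      nlinarith


variable {n : ℕ}

/-- Transfer a vector to Euclidean space. -/
noncomputable def toE {n : ℕ} (v : Fin n → ℝ) : EuclideanSpace ℝ (Fin n) :=
  (WithLp.equiv 2 (Fin n → ℝ)).symm v

lemma toE_surj {n : ℕ} : Function.Surjective (toE (n := n)) :=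
  (WithLp.equiv 2 (Fin n → ℝ)).symm.surjective

lemma dot_eq_inner (v z : Fin n → ℝ) : dot v z = ⟪toE v, toE z⟫ := by
  rw [toE, toE, PiLp.inner_apply]
  simp [dot, RCLike.inner_apply, mul_comm]

lemma dot_add_right (v z z' : Fin n → ℝ) : dot v (z + z') = dot v z + dot v z' := by
  simp [dot, mul_add, Finset.sum_add_distrib]

lemma dot_sub_right (v z z' : Fin n → ℝ) : dot v (z - z') = dot v z - dot v z' := by
  simp [dot, mul_sub, Finset.sum_sub_distrib]

lemma dot_sum_smul_left {q : ℕ} (lam : Fin q → ℝ) (c : Fin q → Fin n → ℝ) (z : Fin n → ℝ) :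
    dot (∑ j, lam j • c j) z = ∑ j, lam j * dot (c j) z := by
  simp only [dot, Finset.sum_apply, Pi.smul_apply, smul_eq_mul, Finset.mul_sum]
  rw [Finset.sum_comm]
  refine Finset.sum_congr rfl fun i _ => ?_
  rw [Finset.sum_mul]
  exact Finset.sum_congr rfl fun j _ => mul_assoc _ _ _

theorem stmt4 {n m q : ℕ} (a : Fin m → Fin n → ℝ) (c : Fin q → Fin n → ℝ)
    (bb : Fin m → ℝ) (xb : Fin n → ℝ)
    (hxb : ∃ xf u, Feas a bb xf ∧ (∀ j, 0 ≤ dot (c j) u) ∧ xb = xf + u)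
    (cv : Fin n → ℝ)
    (hcv : ∃ lam : Fin q → ℝ, (∀ j, 0 ≤ lam j) ∧ cv = ∑ j, lam j • c j)
    (y : Fin m → ℝ)
    (hSne : ∀ b : Fin m → ℝ, (∃ x, Feas a b x) → ∃ x, Pareto a b c x)
    (hgphS : ∀ (b : Fin m → ℝ) (x : Fin n → ℝ), Pareto a b c x →
      dot y (b - bb) ≤ dot cv (x - xb)) :
    ∀ (b : Fin m → ℝ) (x : Fin n → ℝ), Feas a b x →
      dot y (b - bb) ≤ dot cv (x - xb) := by
  classical
  intro b x hx
  obtain ⟨lam, hlam, hcveq⟩ := hcv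
  obtain ⟨x0, hx0⟩ := hSne b ⟨x, hx⟩
  set E := EuclideanSpace ℝ (Fin n)
  set ι := Sum (Fin m) (Fin q) with hι
  set w : ι → EuclideanSpace ℝ (Fin n) :=
    Sum.elim (fun t => toE (a t)) (fun j => toE (c j)) with hw
  set β : ι → ℝ := Sum.elim b (fun j => dot (c j) x) with hβ
  set φ : EuclideanSpace ℝ (Fin n) := ∑ j, toE (c j) with hφ
  have hφinner : ∀ z : Fin n → ℝ, ⟪φ, toE z⟫ = ∑ j, dot (c j) z := by
    intro z
    rw [hφ, sum_inner]
    exact Finset.sum_congr rfl fun j _ => (dot_eq_inner (c j) z).symm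
  have hmem : ∀ z : Fin n → ℝ, (∀ i, ⟪w i, toE z⟫ ≤ β i) ↔
      (Feas a b z ∧ ∀ j, dot (c j) z ≤ dot (c j) x) := by
    intro z
    constructor
    · intro hz
      refine ⟨fun t => ?_, fun j => ?_⟩
      · have := hz (Sum.inl t)
        simp only [hw, hβ, Sum.elim_inl] at this
        rwa [dot_eq_inner]
      · have := hz (Sum.inr j)
        simp only [hw, hβ, Sum.elim_inr] at this
        rw [dot_eq_inner (c j) z, dot_eq_inner (c j) x]
        exact this.trans_eq (dot_eq_inner (c j) x)
    · rintro ⟨h1, h2⟩ (t | j)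
      · simp only [hw, hβ, Sum.elim_inl]
        rw [← dot_eq_inner]; exact h1 t
      · simp only [hw, hβ, Sum.elim_inr]
        rw [← dot_eq_inner]; exact h2 j
  -- Step A: no recession direction improving all objectives
  have hnodir : ¬ ∃ d : EuclideanSpace ℝ (Fin n),
      (∀ i, ⟪w i, d⟫ ≤ (0:ℝ)) ∧ ⟪φ, d⟫ ≤ -1 := by
    rintro ⟨d, hd1, hd2⟩
    obtain ⟨d', rfl⟩ := toE_surj d
    refine hx0.2 ⟨x0 + d', fun t => ?_, fun j => ?_, ?_⟩
    · rw [dot_add_right]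
      have := hd1 (Sum.inl t)
      simp only [hw, Sum.elim_inl] at this
      rw [← dot_eq_inner] at this
      have h0 := hx0.1 t
      linarith
    · rw [dot_add_right]
      have := hd1 (Sum.inr j)
      simp only [hw, Sum.elim_inr] at this
      rw [← dot_eq_inner] at this
      linarith
    · by_contra hnone
      push_neg at hnone
      have hsum : ∑ j, dot (c j) d' ≤ -1 := by rw [← hφinner]; exact hd2
      have hge : (0:ℝ) ≤ ∑ j, dot (c j) d' := by
        refine Finset.sum_nonneg fun j _ => ?_
        have := hnone j
        rw [dot_add_right] at this
        linarith
      linarith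
  -- Step B: the objective is bounded below on the feasible region
  set W : Option ι → EuclideanSpace ℝ (Fin n) := fun k => Option.rec φ w k with hW
  set B0 : Option ι → ℝ := fun k => Option.rec (-1 : ℝ) (fun _ => (0:ℝ)) k with hB0
  have hinfeas : ¬ ∃ z : EuclideanSpace ℝ (Fin n), ∀ k, ⟪W k, z⟫ ≤ B0 k := by
    rintro ⟨z, hz⟩
    exact hnodir ⟨z, fun i => hz (some i), hz none⟩
  obtain ⟨l, hl, hlsum, hlβ⟩ := farkas W B0 hinfeas
  rw [Fintype.sum_option] at hlsum hlβ
  have hWnone : W none = φ := rfl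
  have hWs : ∀ i, W (some i) = w i := fun i => rfl
  have hB0none : B0 none = -1 := rfl
  have hB0s : ∀ i : ι, B0 (some i) = 0 := fun i => rfl
  simp only [hWnone, hWs] at hlsum
  have e1 : ∑ i : ι, l (some i) * B0 (some i) = 0 :=
    Finset.sum_eq_zero fun i _ => by rw [hB0s i]; ring
  have e2 : l none * B0 none = -(l none) := by rw [hB0none]; ring
  rw [e1, e2, add_zero] at hlβ
  have hμpos : 0 < l none := by linarith
  have hbdd : ∀ z : EuclideanSpace ℝ (Fin n), (∀ i, ⟪w i, z⟫ ≤ β i) →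
      (-∑ i, l (some i) * β i) / l none ≤ ⟪φ, z⟫ := by
    intro z hz
    have h2 : ⟪l none • φ + ∑ i, l (some i) • w i, z⟫ = (0:ℝ) := by
      rw [hlsum, inner_zero_left]
    rw [inner_add_left, real_inner_smul_left] at h2
    have hsi : ⟪∑ i, l (some i) • w i, z⟫ = ∑ i, l (some i) * ⟪w i, z⟫ := by
      rw [sum_inner]
      exact Finset.sum_congr rfl fun i _ => real_inner_smul_left _ _ _
    rw [hsi] at h2
    have h4 : ∑ i, l (some i) * ⟪w i, z⟫ ≤ ∑ i, l (some i) * β i :=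
      Finset.sum_le_sum fun i _ => mul_le_mul_of_nonneg_left (hz i) (hl (some i))
    rw [div_le_iff₀ hμpos]
    nlinarith
  -- Step C: attainment
  have hxP : ∀ i, ⟪w i, toE x⟫ ≤ β i := (hmem x).2 ⟨hx, fun j => le_refl _⟩
  obtain ⟨xsE, hxsP, hxsmin⟩ := lp_attain w β φ (toE x) hxP _ hbdd
  obtain ⟨xs, rfl⟩ := toE_surj xsE
  have hxsmem := (hmem xs).1 hxsP
  -- xs is Pareto
  have hxspar : Pareto a b c xs := by
    refine ⟨hxsmem.1, ?_⟩
    rintro ⟨y', hy'f, hy'le, j0, hy'lt⟩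
    have hy'P : ∀ i, ⟪w i, toE y'⟫ ≤ β i :=
      (hmem y').2 ⟨hy'f, fun j => (hy'le j).trans (hxsmem.2 j)⟩
    have hmin := hxsmin _ hy'P
    rw [hφinner, hφinner] at hmin
    have hlt : ∑ j, dot (c j) y' < ∑ j, dot (c j) xs := by
      refine Finset.sum_lt_sum (fun j _ => hy'le j) ⟨j0, Finset.mem_univ j0, hy'lt⟩
    linarith
  -- Step D: conclude
  have hkey := hgphS b xs hxspar
  have hcvle : dot cv xs ≤ dot cv x := by
    rw [hcveq, dot_sum_smul_left, dot_sum_smul_left]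
    exact Finset.sum_le_sum fun j _ =>
      mul_le_mul_of_nonneg_left (hxsmem.2 j) (hlam j)
  rw [dot_sub_right, dot_sub_right] at hkey
  rw [dot_sub_right, dot_sub_right]
  linarith

end Stmt4Aux
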